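/- arXiv:1609.01136 — 9 statements merged into one kernel-verified Lean document; each statement's English description precedes it below -/
import Mathlib

section
/- (BCH bound) Let C be a cyclic code of length n over F_q with gcd(n,q)=1, and let α be a primitive n-th root of unity in the splitting field of x^n - 1. Suppose the generator polynomial g(x) of C has among its zeros α^u, α^{u+b}, α^{u+2b}, ..., α^{u+(δ-2)b}, where gcd(b,n)=1 and u ≥ 0. Then the minimum distance of C is at least δ. -/
open Polynomial Finset

/-- BCH bound: if the generator polynomial `g ∣ x^n - 1` of a cyclic code of length `n`
over `F_q` (with `gcd(n,q)=1`) has among its zeros `α^u, α^{u+b}, …, α^{u+(δ-2)b}`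
for a primitive `n`-th root of unity `α` in the splitting field and `gcd(b,n)=1`,
then every nonzero codeword has Hamming weight at least `δ`. -/
theorem stmt5 (q n : ℕ) (hq : IsPrimePow q) (hn : 0 < n)
    (F E : Type*) [Field F] [Fintype F] [DecidableEq F] (hF : Fintype.card F = q)
    [Field E] [Algebra F E] (hcop : Nat.Coprime n q)
    (α : E) (hα1 : α ^ n = 1) (hα2 : ∀ m : ℕ, 0 < m → m < n → α ^ m ≠ 1)
    (g : F[X]) (hg : g ∣ X ^ n - 1)
    (δ b u : ℕ) (hδ : 2 ≤ δ) (hb : Nat.Coprime b n)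
    (hz : ∀ t : ℕ, t ≤ δ - 2 → Polynomial.aeval (α ^ (u + t * b)) g = 0) :
    ∀ c : Fin n → F, c ≠ 0 →
      g ∣ ∑ i : Fin n, C (c i) * X ^ (i : ℕ) →
      δ ≤ (Finset.univ.filter fun i => c i ≠ 0).card := by
  intro c hc hdvd
  by_contra hlt
  push_neg at hlt
  set S := Finset.univ.filter fun i : Fin n => c i ≠ 0 with hS
  set w := S.card with hw
  -- α is nonzero
  have hα0 : α ≠ 0 := by
    intro h
    rw [h, zero_pow hn.ne'] at hα1
    exact zero_ne_one hα1
  -- α^m depends only on m mod n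
  have hmod : ∀ m : ℕ, α ^ m = α ^ (m % n) := by
    intro m
    conv_lhs => rw [← Nat.div_add_mod m n]
    rw [pow_add, pow_mul, hα1, one_pow, one_mul]
  -- powers of α are injective below n
  have hsmall : ∀ i j : ℕ, i < n → j < n → α ^ i = α ^ j → i = j := by
    intro i j hi hj hij
    rcases le_total i j with h | h
    · by_contra hne
      have h1 : α ^ i * α ^ (j - i) = α ^ i * 1 := by
        rw [← pow_add, Nat.add_sub_cancel' h, hij, mul_one]
      have h2 := mul_left_cancel₀ (pow_ne_zero i hα0) h1
      exact hα2 (j - i) (by omega) (by omega) h2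
    · by_contra hne
      have h1 : α ^ j * α ^ (i - j) = α ^ j * 1 := by
        rw [← pow_add, Nat.add_sub_cancel' h, ← hij, mul_one]
      have h2 := mul_left_cancel₀ (pow_ne_zero j hα0) h1
      exact hne ((hα2 (i - j) (by omega) (by omega) h2).elim)
  -- injectivity of i ↦ α ^ (b * i) on Fin n
  have hinj : Function.Injective (fun i : Fin n => α ^ (b * (i : ℕ))) := by
    intro i j hij
    simp only at hij
    rw [hmod (b * i), hmod (b * j)] at hij
    have h1 : (b * (i : ℕ)) % n = (b * (j : ℕ)) % n :=
      hsmall _ _ (Nat.mod_lt _ hn) (Nat.mod_lt _ hn) hij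
    have h2 : (b * (i : ℕ)) ≡ b * (j : ℕ) [MOD n] := h1
    have h3 : (i : ℕ) ≡ (j : ℕ) [MOD n] := h2.cancel_left_of_coprime (by
      rwa [Nat.coprime_comm] at hb)
    have h4 : (i : ℕ) = (j : ℕ) := by
      rwa [Nat.ModEq, Nat.mod_eq_of_lt i.isLt, Nat.mod_eq_of_lt j.isLt] at h3
    exact Fin.ext h4
  -- the codeword polynomial vanishes at α^(u+t*b) for t ≤ δ-2
  obtain ⟨h, hp⟩ := hdvd
  have hpz : ∀ t : ℕ, t ≤ δ - 2 →
      ∑ i : Fin n, algebraMap F E (c i) * (α ^ (u + t * b)) ^ (i : ℕ) = 0 := by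
    intro t ht
    have := congrArg (aeval (α ^ (u + t * b))) hp
    rw [map_mul, hz t ht, zero_mul, map_sum] at this
    simpa only [map_mul, aeval_C, map_pow, aeval_X] using this
  -- set up the Vandermonde system
  set e := S.equivFin with he
  set idx : Fin w → Fin n := fun j => (e.symm j : Fin n) with hidx
  have hidx_mem : ∀ j, idx j ∈ S := fun j => (e.symm j).2
  have hidx_inj : Function.Injective idx :=
    Subtype.val_injective.comp e.symm.injective
  set f : Fin w → E := fun j => α ^ (b * (idx j : ℕ)) with hf
  set v : Fin w → E := fun j =>
    algebraMap F E (c (idx j)) * α ^ (u * (idx j : ℕ)) with hv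
  have hfinj : Function.Injective f := hinj.comp hidx_inj
  have hveq : v = 0 := by
    apply Matrix.eq_zero_of_forall_pow_sum_mul_pow_eq_zero hfinj
    intro t
    have ht : (t : ℕ) ≤ δ - 2 := by
      have := t.isLt
      omega
    have key := hpz t ht
    have hterm : ∀ i : Fin n,
        algebraMap F E (c i) * (α ^ (u + (t : ℕ) * b)) ^ (i : ℕ)
          = algebraMap F E (c i) * α ^ (u * (i : ℕ)) * (α ^ (b * (i : ℕ))) ^ (t : ℕ) := by
      intro i
      rw [← pow_mul, ← pow_mul, mul_assoc, ← pow_add]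
      ring_nf
    rw [Finset.sum_congr rfl (fun i _ => hterm i)] at key
    have hrestrict : ∑ i : Fin n,
        algebraMap F E (c i) * α ^ (u * (i : ℕ)) * (α ^ (b * (i : ℕ))) ^ (t : ℕ)
        = ∑ i ∈ S,
        algebraMap F E (c i) * α ^ (u * (i : ℕ)) * (α ^ (b * (i : ℕ))) ^ (t : ℕ) := by
      refine (Finset.sum_subset (Finset.filter_subset _ _) ?_).symm
      intro i _ hi
      simp only [Finset.mem_filter, Finset.mem_univ, true_and, not_not] at hi
      rw [hi, map_zero, zero_mul, zero_mul]
    rw [hrestrict] at key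
    calc ∑ j : Fin w, v j * f j ^ (t : ℕ)
        = ∑ i ∈ S, algebraMap F E (c i) * α ^ (u * (i : ℕ))
            * (α ^ (b * (i : ℕ))) ^ (t : ℕ) := by
          rw [← Finset.sum_coe_sort S (fun i => algebraMap F E (c i) * α ^ (u * (i : ℕ))
            * (α ^ (b * (i : ℕ))) ^ (t : ℕ))]
          exact Equiv.sum_comp e.symm
            (fun x : {x // x ∈ S} => algebraMap F E (c x) * α ^ (u * ((x : Fin n) : ℕ))
              * (α ^ (b * ((x : Fin n) : ℕ))) ^ (t : ℕ))
      _ = 0 := key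
  -- contradiction: some entry of v is nonzero
  have hw1 : 0 < w := by
    obtain ⟨i, hi⟩ := Function.ne_iff.mp hc
    rw [hw, hS, Finset.card_pos]
    exact ⟨i, Finset.mem_filter.mpr ⟨Finset.mem_univ i, hi⟩⟩
  set j : Fin w := ⟨0, hw1⟩
  have hvj : v j = 0 := congrFun hveq j
  rw [hv] at hvj
  rcases mul_eq_zero.mp hvj with h1 | h1
  · have : c (idx j) ≠ 0 := (Finset.mem_filter.mp (hidx_mem j)).2
    exact this ((_root_.map_eq_zero (algebraMap F E)).mp h1)
  · exact pow_ne_zero _ hα0 h1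
end

section
/- Let n, r, δ be positive integers with (r+δ-1) | n, let ν' = n/(r+δ-1), let μ be a positive integer with μ ≤ ν', and let b be a positive integer with gcd(b, n) = 1. Fix a residue j modulo (r+δ-1) and let L = {i mod n : i ≡ j (mod r+δ-1)} and D = {(j + s·b) mod n : s = 0, 1, ..., n - μ(r+δ-1) + δ - 2}. Then |L ∩ D| = ν' - μ + 1. -/
open Finset

/-- Counting lemma: with `(r+δ-1) ∣ n`, `ν' = n/(r+δ-1)`, `μ ≤ ν'`, `gcd(b,n)=1`,
the coset `L = {i mod n : i ≡ j (mod r+δ-1)}` meets the arithmetic progression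
`D = {j + s·b : s = 0,…,n-μ(r+δ-1)+δ-2}` in exactly `ν' - μ + 1` elements. -/
theorem stmt6 (n r δ μ b : ℕ) [NeZero n] (hr : 0 < r) (hδ : 2 ≤ δ)
    (hdvd : (r + δ - 1) ∣ n) (hμ : 1 ≤ μ) (hμ' : μ ≤ n / (r + δ - 1))
    (hb : Nat.Coprime b n) (j : ℕ) :
    ((Finset.univ.filter fun x : ZMod n =>
        ZMod.castHom hdvd (ZMod (r + δ - 1)) x = (j : ZMod (r + δ - 1))) ∩
      (Finset.range (n - μ * (r + δ - 1) + δ - 1)).image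
        (fun s => ((j + s * b : ℕ) : ZMod n))).card
      = n / (r + δ - 1) - μ + 1 := by
  set m := r + δ - 1 with hm
  have hm2 : 2 ≤ m := by omega
  haveI : NeZero m := ⟨by omega⟩
  obtain ⟨q, hq⟩ := hdvd
  have hq' : n / m = q := by rw [hq]; exact Nat.mul_div_cancel_left q (by omega)
  rw [hq'] at hμ' ⊢
  have hμm : μ * m ≤ n := by
    rw [hq, mul_comm m q]
    exact Nat.mul_le_mul_right m hμ'
  have hsub : n - μ * m = (q - μ) * m := by
    rw [hq, mul_comm m q, ← Nat.sub_mul]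
  set N := n - μ * m + δ - 1 with hN
  have hNval : N = (q - μ) * m + (δ - 1) := by omega
  have hδm : δ - 1 < m := by omega
  have hNn : N ≤ n := by
    have : m ≤ μ * m := Nat.le_mul_of_pos_left m (by omega)
    omega
  have hbm : Nat.Coprime b m := hb.coprime_dvd_right ⟨q, hq⟩
  have hbu : IsUnit (b : ZMod m) := (ZMod.isUnit_iff_coprime b m).mpr hbm
  have hbn : IsUnit (b : ZMod n) := (ZMod.isUnit_iff_coprime b n).mpr hb
  -- predicate equivalence
  have hP : ∀ s : ℕ, (ZMod.castHom ⟨q, hq⟩ (ZMod m) ((j + s * b : ℕ) : ZMod n)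
      = (j : ZMod m)) ↔ m ∣ s := by
    intro s
    rw [map_natCast]
    push_cast
    rw [add_eq_left, hbu.mul_left_eq_zero, ZMod.natCast_eq_zero_iff]
  have key : (Finset.univ.filter fun x : ZMod n =>
        ZMod.castHom ⟨q, hq⟩ (ZMod m) x = (j : ZMod m)) ∩
      (Finset.range N).image (fun s => ((j + s * b : ℕ) : ZMod n))
      = ((Finset.range N).filter (fun s => m ∣ s)).image
        (fun s => ((j + s * b : ℕ) : ZMod n)) := by
    ext x
    simp only [mem_inter, mem_filter, mem_univ, true_and, mem_image, mem_range]
    constructor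
    · rintro ⟨hx, s, hs, rfl⟩
      exact ⟨s, ⟨hs, (hP s).mp hx⟩, rfl⟩
    · rintro ⟨s, ⟨hs, hd⟩, rfl⟩
      exact ⟨(hP s).mpr hd, s, hs, rfl⟩
  rw [key, Finset.card_image_of_injOn, ]
  · -- count multiples of m in range N
    have hset : (Finset.range N).filter (fun s => m ∣ s)
        = (Finset.range (q - μ + 1)).image (· * m) := by
      ext s
      simp only [mem_filter, mem_range, mem_image]
      constructor
      · rintro ⟨hs, t, rfl⟩
        refine ⟨t, ?_, (mul_comm t m)⟩
        rw [hNval] at hs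
        by_contra h
        have ht : q - μ + 1 ≤ t := by omega
        have : (q - μ + 1) * m ≤ m * t := by
          rw [mul_comm m t]; exact Nat.mul_le_mul_right m ht
        have : (q - μ) * m + m ≤ m * t := by
          rw [add_mul, one_mul] at this; exact this
        omega
      · rintro ⟨t, ht, rfl⟩
        refine ⟨?_, ⟨t, (mul_comm t m)⟩⟩
        rw [hNval]
        have : t * m ≤ (q - μ) * m := Nat.mul_le_mul_right m (by omega)
        omega
    rw [hset, Finset.card_image_of_injective _ (fun a b h => by
      exact Nat.eq_of_mul_eq_mul_right (by omega) h), Finset.card_range]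
  · -- injectivity on the filtered set
    intro s₁ hs₁ s₂ hs₂ h
    simp only [coe_filter, Set.mem_setOf_eq, mem_range] at hs₁ hs₂
    have h1 : s₁ < n := lt_of_lt_of_le hs₁.1 hNn
    have h2 : s₂ < n := lt_of_lt_of_le hs₂.1 hNn
    have : ((s₁ : ZMod n)) = (s₂ : ZMod n) := by
      push_cast at h
      have := add_left_cancel h
      exact hbn.mul_right_cancel this
    have := congrArg ZMod.val this
    rwa [ZMod.val_natCast_of_lt h1, ZMod.val_natCast_of_lt h2] at this
end

section
/- Let n, r, δ, μ, b be as follows: (r+δ-1) | n, ν' = n/(r+δ-1), 1 ≤ μ ≤ ν', gcd(b,n) = 1, and let i_1 < i_2 < ... < i_{δ-1} be an arithmetic progression of δ-1 residues modulo r+δ-1 with common difference b. For each m ∈ {i_1,...,i_{δ-1}} let L_m = {i mod n : i ≡ m (mod r+δ-1)}, and let D = {(j + s·b) mod n : s = 0,...,n - μ(r+δ-1) + δ - 2} where j ≡ i_1 (mod r+δ-1). Then |(⋃_m L_m) ∪ D| = n - k, where k = μ·r. -/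
open Finset

/-- With `(r+δ-1) ∣ n`, `ν' = n/(r+δ-1)`, `1 ≤ μ ≤ ν'`, `gcd(b,n)=1`, cosets
`L_m` for the arithmetic progression of residues `m = a, a+b, …, a+(δ-2)b`
(mod `r+δ-1`), and `D = {j + s·b : s = 0,…,n-μ(r+δ-1)+δ-2}` with
`j ≡ a (mod r+δ-1)`, one has `|(⋃_m L_m) ∪ D| = n - k` where `k = μ·r`. -/
theorem stmt7 (n r δ μ b k : ℕ) [NeZero n] (hr : 0 < r) (hδ : 2 ≤ δ)
    (hdvd : (r + δ - 1) ∣ n) (hμ : 1 ≤ μ) (hμ' : μ ≤ n / (r + δ - 1))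
    (hb : Nat.Coprime b n) (hk : k = μ * r)
    (a j : ℕ) (hj : (j : ZMod (r + δ - 1)) = (a : ZMod (r + δ - 1))) :
    (((Finset.range (δ - 1)).biUnion fun t =>
        Finset.univ.filter fun x : ZMod n =>
          ZMod.castHom hdvd (ZMod (r + δ - 1)) x
            = ((a + t * b : ℕ) : ZMod (r + δ - 1))) ∪
      (Finset.range (n - μ * (r + δ - 1) + δ - 1)).image
        (fun s => ((j + s * b : ℕ) : ZMod n))).card = n - k := by
  set q := r + δ - 1 with hqdef
  have hq2 : 2 ≤ q := by omega
  have hq0 : 0 < q := by omega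
  set ν := n / q with hνdef
  have hn : ν * q = n := Nat.div_mul_cancel hdvd
  have hn0 : n ≠ 0 := NeZero.ne n
  have hμν : μ ≤ ν := hμ'
  set N := (ν - μ) * q + (δ - 1) with hNdef
  have hsub : (ν - μ) * q = ν * q - μ * q := Nat.sub_mul ν μ q
  have hμq : μ * q ≤ ν * q := Nat.mul_le_mul_right q hμν
  have hN' : n - μ * q + δ - 1 = N := by omega
  have hNn : N ≤ n := by
    have h1 : (ν - μ + 1) * q ≤ ν * q := Nat.mul_le_mul_right q (by omega)
    rw [add_mul, one_mul] at h1
    omega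
  have hbq : Nat.Coprime b q := hb.coprime_dvd_right hdvd
  have hbu : IsUnit (b : ZMod n) := (ZMod.isUnit_iff_coprime b n).2 hb
  -- injectivity of s ↦ j + s*b on [0, n)
  have hginj : ∀ s₁ < n, ∀ s₂ < n,
      ((j + s₁ * b : ℕ) : ZMod n) = ((j + s₂ * b : ℕ) : ZMod n) → s₁ = s₂ := by
    intro s₁ h₁ s₂ h₂ h
    push_cast at h
    have h' : (s₁ : ZMod n) * b = (s₂ : ZMod n) * b := add_left_cancel h
    have h'' := hbu.mul_right_cancel h'
    calc s₁ = ((s₁ : ℕ) : ZMod n).val := (ZMod.val_cast_of_lt h₁).symm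
      _ = ((s₂ : ℕ) : ZMod n).val := by rw [h'']
      _ = s₂ := ZMod.val_cast_of_lt h₂
  -- surjectivity
  have hsurj : ∀ x : ZMod n, ∃ s, s < n ∧ ((j + s * b : ℕ) : ZMod n) = x := by
    intro x
    obtain ⟨u, hu⟩ := hbu
    refine ⟨((x - (j : ZMod n)) * ↑u⁻¹).val, ZMod.val_lt _, ?_⟩
    push_cast
    rw [ZMod.natCast_val, ZMod.cast_id, ← hu, mul_assoc, ← Units.val_mul,
      inv_mul_cancel, Units.val_one, mul_one]
    ring
  -- residue computation
  have hres : ∀ s : ℕ, (ZMod.castHom hdvd (ZMod q)) ((j + s * b : ℕ) : ZMod n)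
      = ((a + s * b : ℕ) : ZMod q) := by
    intro s
    rw [map_natCast]
    push_cast
    rw [hj]
  -- the union as an image
  have himg : (((Finset.range (δ - 1)).biUnion fun t =>
        Finset.univ.filter fun x : ZMod n =>
          ZMod.castHom hdvd (ZMod q) x = ((a + t * b : ℕ) : ZMod q)) ∪
      (Finset.range (n - μ * q + δ - 1)).image
        (fun s => ((j + s * b : ℕ) : ZMod n)))
      = ((Finset.range n).filter fun s => s % q < δ - 1 ∨ s < N).image
          (fun s => ((j + s * b : ℕ) : ZMod n)) := by
    ext x
    simp only [mem_union, mem_biUnion, mem_filter, mem_univ, true_and,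
      mem_image, mem_range, hN']
    constructor
    · rintro (⟨t, ht, hx⟩ | ⟨s, hs, hx⟩)
      · obtain ⟨s, hsn, hgs⟩ := hsurj x
        refine ⟨s, ⟨hsn, Or.inl ?_⟩, hgs⟩
        rw [← hgs, hres] at hx
        have hmem : (a + s * b) ≡ (a + t * b) [MOD q] :=
          (ZMod.natCast_eq_natCast_iff _ _ _).1 hx
        have hst : s ≡ t [MOD q] :=
          (Nat.ModEq.add_left_cancel' a hmem).cancel_right_of_coprime hbq.symm
        have h1 : s % q = t % q := hst
        have ht' : t % q = t := Nat.mod_eq_of_lt (by omega)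
        omega
      · exact ⟨s, ⟨by omega, Or.inr hs⟩, hx⟩
    · rintro ⟨s, ⟨hsn, hP⟩, hgs⟩
      rcases hP with h | h
      · refine Or.inl ⟨s % q, h, ?_⟩
        rw [← hgs, hres]
        exact (ZMod.natCast_eq_natCast_iff _ _ _).2
          (Nat.ModEq.add_left a (((Nat.mod_modEq s q).mul_right b).symm))
      · exact Or.inr ⟨s, h, hgs⟩
  -- cardinality of the "bad" set
  have hTcard : ((Finset.range n).filter
      fun s => ¬(s % q < δ - 1 ∨ s < N)).card = μ * r := by
    have hbij := Finset.card_nbij'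
      (s := (range μ) ×ˢ (range r))
      (t := (range n).filter fun s => ¬(s % q < δ - 1 ∨ s < N))
      (i := fun p => (ν - μ + p.1) * q + (δ - 1) + p.2)
      (j := fun s => (s / q - (ν - μ), s % q - (δ - 1)))
      ?_ ?_ ?_ ?_
    · rw [← hbij, card_product, card_range, card_range]
    · rintro ⟨u, v⟩ hp
      simp only [mem_coe, mem_product, mem_range] at hp
      obtain ⟨hu, hv⟩ := hp
      have hlt : δ - 1 + v < q := by omega
      have e : (ν - μ + u) * q + (δ - 1) + v = (δ - 1 + v) + (ν - μ + u) * q := by ring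
      have hmod : ((ν - μ + u) * q + (δ - 1) + v) % q = δ - 1 + v := by
        rw [e, Nat.add_mul_mod_self_right, Nat.mod_eq_of_lt hlt]
      have hbig : (ν - μ + u + 1) * q ≤ ν * q := Nat.mul_le_mul_right q (by omega)
      rw [add_mul, one_mul] at hbig
      have hlo : (ν - μ) * q ≤ (ν - μ + u) * q := Nat.mul_le_mul_right q (by omega)
      simp only [mem_coe, mem_filter, mem_range]
      refine ⟨by omega, ?_⟩
      push_neg
      constructor
      · omega
      · omega
    · intro s hs
      simp only [mem_coe, mem_filter, mem_range] at hs
      obtain ⟨hsn, hbad⟩ := hs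
      push_neg at hbad
      obtain ⟨h1, h2⟩ := hbad
      have hdivlow : ν - μ ≤ s / q :=
        (Nat.le_div_iff_mul_le hq0).2 (le_trans (by omega) h2)
      have hdivhi : s / q < ν := (Nat.div_lt_iff_lt_mul hq0).2 (by omega)
      have hmodlt : s % q < q := Nat.mod_lt s hq0
      simp only [mem_coe, mem_product, mem_range]
      constructor
      · omega
      · omega
    · rintro ⟨u, v⟩ hp
      simp only [mem_coe, mem_product, mem_range] at hp
      obtain ⟨hu, hv⟩ := hp
      have hlt : δ - 1 + v < q := by omega
      have e : (ν - μ + u) * q + (δ - 1) + v = (δ - 1 + v) + (ν - μ + u) * q := by ring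
      have hmod : ((ν - μ + u) * q + (δ - 1) + v) % q = δ - 1 + v := by
        rw [e, Nat.add_mul_mod_self_right, Nat.mod_eq_of_lt hlt]
      have hdiv : ((ν - μ + u) * q + (δ - 1) + v) / q = ν - μ + u := by
        rw [e, Nat.add_mul_div_right _ _ hq0, Nat.div_eq_of_lt hlt, zero_add]
      simp only [hmod, hdiv, Prod.mk.injEq]
      omega
    · intro s hs
      simp only [mem_coe, mem_filter, mem_range] at hs
      obtain ⟨hsn, hbad⟩ := hs
      push_neg at hbad
      obtain ⟨h1, h2⟩ := hbad
      have hdivlow : ν - μ ≤ s / q :=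
        (Nat.le_div_iff_mul_le hq0).2 (le_trans (by omega) h2)
      have e1 : ν - μ + (s / q - (ν - μ)) = s / q := by omega
      show (ν - μ + (s / q - (ν - μ))) * q + (δ - 1) + (s % q - (δ - 1)) = s
      rw [e1, add_assoc, Nat.add_sub_cancel' h1, Nat.div_add_mod']
  have hinj : Set.InjOn (fun s => ((j + s * b : ℕ) : ZMod n))
      ↑((Finset.range n).filter fun s => s % q < δ - 1 ∨ s < N) := by
    intro s₁ h₁ s₂ h₂ h
    simp only [coe_filter, Set.mem_setOf_eq, mem_range] at h₁ h₂
    exact hginj s₁ h₁.1 s₂ h₂.1 h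
  rw [himg, Finset.card_image_of_injOn hinj]
  have hsplit := Finset.card_filter_add_card_filter_not
    (s := Finset.range n) (p := fun s => s % q < δ - 1 ∨ s < N)
  rw [card_range] at hsplit
  omega
end

section
/- Let q be a prime power, n | q-1, α ∈ F_q a primitive n-th root of unity, r, δ ≥ 2 positive integers with (r+δ-1) | n, and set ν' = n/(r+δ-1). Fix j with 0 ≤ j ≤ r+δ-2. For each m in {0,...,ν'-1}, the vector h_m = (1, α^{m(r+δ-1)+j}, α^{2(m(r+δ-1)+j)}, ..., α^{(n-1)(m(r+δ-1)+j)}) is defined. Then the n-dimensional vector v = (v_0,...,v_{n-1}) with v_t = α^{t·j} if ν' | t and v_t = 0 otherwise, lies in the F_q-span of {h_0, ..., h_{ν'-1}}. -/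
open Finset

/-- With `n ∣ q-1`, `α ∈ F_q` a primitive `n`-th root of unity, `(r+δ-1) ∣ n`,
`ν' = n/(r+δ-1)` and `0 ≤ j ≤ r+δ-2`, the vector `v` with `v_t = α^{t·j}` when
`ν' ∣ t` and `v_t = 0` otherwise lies in the span of the vectors
`h_m = (α^{t(m(r+δ-1)+j)})_{t<n}`, `m = 0,…,ν'-1`. -/
theorem stmt8 (q n r δ : ℕ) (hq : IsPrimePow q) (hn : 0 < n) (hdvd : n ∣ q - 1)
    (F : Type*) [Field F] [Fintype F] (hF : Fintype.card F = q)
    (α : F) (hα1 : α ^ n = 1) (hα2 : ∀ m : ℕ, 0 < m → m < n → α ^ m ≠ 1)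
    (hr : 0 < r) (hδ : 2 ≤ δ) (hd : (r + δ - 1) ∣ n)
    (j : ℕ) (hj : j ≤ r + δ - 2) :
    (fun t : Fin n => if (n / (r + δ - 1)) ∣ (t : ℕ) then α ^ ((t : ℕ) * j) else 0)
      ∈ Submodule.span F
        (Set.range fun m : Fin (n / (r + δ - 1)) => fun t : Fin n =>
          α ^ ((t : ℕ) * ((m : ℕ) * (r + δ - 1) + j))) := by
  have he1 : 0 < r + δ - 1 := by omega
  set e := r + δ - 1 with he
  set ν := n / e with hν
  clear_value e ν
  have hne : n = ν * e := by rw [hν, Nat.div_mul_cancel hd]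
  have hνpos : 0 < ν := by
    rw [hν]; exact Nat.div_pos (Nat.le_of_dvd hn hd) he1
  -- orderOf α = n
  have hord : orderOf α = n := by
    have h1 : orderOf α ∣ n := orderOf_dvd_of_pow_eq_one hα1
    have h2 : 0 < orderOf α := (isOfFinOrder_iff_pow_eq_one.mpr ⟨n, hn, hα1⟩).orderOf_pos
    rcases lt_or_eq_of_le (Nat.le_of_dvd hn h1) with h | h
    · exact absurd (pow_orderOf_eq_one α) (hα2 _ h2 h)
    · exact h
  have hpow1 : ∀ m : ℕ, α ^ m = 1 ↔ n ∣ m := by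
    intro m
    rw [← hord, orderOf_dvd_iff_pow_eq_one]
  -- (ν : F) ≠ 0
  have hq1 : 1 < q := hq.one_lt
  have hcard0 : ((q : F)) = 0 := by rw [← hF]; exact Nat.cast_card_eq_zero F
  have hνF : (ν : F) ≠ 0 := by
    intro h0
    obtain ⟨k, hk⟩ : ν ∣ q - 1 := dvd_trans ⟨e, hne⟩ hdvd
    have h1 : q - 1 + 1 = q := by omega
    have h2 : ((ν * k : ℕ) : F) + 1 = (q : F) := by
      rw [← hk]; exact_mod_cast congrArg (Nat.cast : ℕ → F) h1
    push_cast at h2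
    rw [h0, hcard0] at h2
    simp at h2
  -- the key pointwise sum identity
  have key : (fun t : Fin n => if ν ∣ (t : ℕ) then α ^ ((t : ℕ) * j) else 0)
      = ∑ m : Fin ν, (ν : F)⁻¹ • (fun t : Fin n => α ^ ((t : ℕ) * ((m : ℕ) * e + j))) := by
    funext t
    have hsum : ∀ m : Fin ν, α ^ ((t : ℕ) * ((m : ℕ) * e + j))
        = α ^ ((t : ℕ) * j) * (α ^ ((t : ℕ) * e)) ^ (m : ℕ) := by
      intro m
      rw [← pow_mul, ← pow_add]
      ring_nf
    simp only [Finset.sum_apply, Pi.smul_apply, smul_eq_mul]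
    rw [← Finset.mul_sum]
    simp only [hsum]
    rw [← Finset.mul_sum]
    by_cases h : ν ∣ (t : ℕ)
    · simp only [h, if_true]
      have hβ : α ^ ((t : ℕ) * e) = 1 := by
        rw [hpow1]
        obtain ⟨c, hc⟩ := h
        exact ⟨c, by rw [hc, hne]; ring⟩
      simp [hβ]
      field_simp
    · simp only [h, if_false]
      have hβ : α ^ ((t : ℕ) * e) ≠ 1 := by
        intro hdv
        rw [hpow1] at hdv
        apply h
        have hdv' : ν * e ∣ (t : ℕ) * e := by rwa [← hne]
        exact (Nat.mul_dvd_mul_iff_right he1).mp hdv'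
      have hz : ∑ m : Fin ν, (α ^ ((t : ℕ) * e)) ^ (m : ℕ) = 0 := by
        rw [Fin.sum_univ_eq_sum_range (fun m => (α ^ ((t : ℕ) * e)) ^ m) ν]
        rw [geom_sum_eq hβ]
        have h1 : (α ^ ((t : ℕ) * e)) ^ ν = 1 := by
          rw [← pow_mul, hpow1]
          have hdn : n ∣ e * ν := ⟨1, by rw [hne]; ring⟩
          rw [mul_assoc]
          exact hdn.mul_left (t : ℕ)
        rw [h1]
        simp
      rw [hz]
      ring
  rw [key]
  apply Submodule.sum_mem
  intro m _
  exact Submodule.smul_mem _ _ (Submodule.subset_span (Set.mem_range_self m))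
end

section
/- Let α be a primitive n-th root of unity in a field F, let ν' and r+δ-1 be positive integers with ν'(r+δ-1) = n, and let i_1 < i_2 < ... < i_{δ-1} be integers with 0 ≤ i_1 and i_{δ-1} ≤ r+δ-2 forming an arithmetic progression with common difference b satisfying gcd(b,n)=1. Then the (δ-1) × (r+δ-1) matrix V' with entries V'_{j,t} = (α^{ν' i_j})^t (1 ≤ j ≤ δ-1, 0 ≤ t ≤ r+δ-2) has the property that every (δ-1) × (δ-1) submatrix formed by any δ-1 of its columns is invertible; equivalently, V' is the parity-check matrix of an [r+δ-1, r, δ] MDS code. -/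
open Finset

/-- For `α` a primitive `n`-th root of unity, `ν'(r+δ-1) = n`, and exponents
`i_j = i1 + j·b` (an arithmetic progression with `gcd(b,n)=1` contained in
`[0, r+δ-2]`), every `(δ-1)×(δ-1)` submatrix of the `(δ-1)×(r+δ-1)` matrix
`V'_{j,t} = (α^{ν' i_j})^t` obtained by choosing `δ-1` columns is invertible. -/
theorem stmt9 (n r δ ν b i1 : ℕ) (hδ : 2 ≤ δ) (hr : 0 < r) (hn0 : 0 < n)
    (hn : ν * (r + δ - 1) = n)
    (F : Type*) [Field F]
    (α : F) (hα1 : α ^ n = 1) (hα2 : ∀ m : ℕ, 0 < m → m < n → α ^ m ≠ 1)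
    (hb : Nat.Coprime b n) (hprog : i1 + (δ - 2) * b ≤ r + δ - 2) :
    ∀ cols : Fin (δ - 1) → Fin (r + δ - 1), Function.Injective cols →
      (Matrix.of fun jj s : Fin (δ - 1) =>
        (α ^ (ν * (i1 + (jj : ℕ) * b))) ^ ((cols s : ℕ))).det ≠ 0 := by
  intro cols hcols
  have hm0 : 0 < r + δ - 1 := by omega
  have hν0 : 0 < ν := by
    rcases Nat.eq_zero_or_pos ν with h | h
    · subst h; simp at hn; omega
    · exact h
  have hα0 : α ≠ 0 := by
    intro h
    rw [h, zero_pow hn0.ne'] at hα1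
    exact zero_ne_one hα1
  -- order of α is n
  have hord : orderOf α = n := by
    have h1 : orderOf α ∣ n := orderOf_dvd_of_pow_eq_one hα1
    have h2 : 0 < orderOf α := by
      have : IsOfFinOrder α := isOfFinOrder_iff_pow_eq_one.mpr ⟨n, hn0, hα1⟩
      exact this.orderOf_pos
    rcases lt_or_eq_of_le (Nat.le_of_dvd hn0 h1) with h | h
    · exact absurd (pow_orderOf_eq_one α) (hα2 _ h2 h)
    · exact h
  -- coprimality of b with m
  have hbm : Nat.Coprime b (r + δ - 1) := Nat.Coprime.coprime_dvd_right ⟨ν, by rw [← hn]; ring⟩ hb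
  set x : Fin (δ - 1) → F := fun s => (α ^ (ν * b)) ^ ((cols s : ℕ)) with hx
  set c : Fin (δ - 1) → F := fun s => (α ^ (ν * i1)) ^ ((cols s : ℕ)) with hc
  have hb0 : 0 < b := by
    rcases Nat.eq_zero_or_pos b with h | h
    · exfalso
      have h1 : n = 1 := by simpa [h, Nat.Coprime] using hb
      rw [← hn] at h1
      have h2 := Nat.eq_one_of_mul_eq_one_left h1
      omega
    · exact h
  have hdvd : ∀ k : ℕ, α ^ k = 1 → n ∣ k := by
    intro k hk
    have h1 : α ^ (k % n) = 1 := by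
      conv at hk => rw [← Nat.div_add_mod k n]
      rwa [pow_add, pow_mul, hα1, one_pow, one_mul] at hk
    rcases Nat.eq_zero_or_pos (k % n) with h | h
    · exact Nat.dvd_of_mod_eq_zero h
    · exact absurd h1 (hα2 _ h (Nat.mod_lt _ hn0))
  have key : ∀ s t : Fin (δ - 1), (cols s : ℕ) ≤ (cols t : ℕ) →
      α ^ (ν * b * (cols s : ℕ)) = α ^ (ν * b * (cols t : ℕ)) →
      (cols s : ℕ) = (cols t : ℕ)  := by
    intro s t hle heq
    have hsplit : ν * b * (cols t : ℕ) =
        ν * b * (cols s : ℕ) + ν * b * ((cols t : ℕ) - (cols s : ℕ)) := by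
      rw [← Nat.mul_add]
      congr 1
      omega
    rw [hsplit, pow_add] at heq
    have h1 : α ^ (ν * b * ((cols t : ℕ) - (cols s : ℕ))) = 1 := by
      have hne : α ^ (ν * b * (cols s : ℕ)) ≠ 0 := pow_ne_zero _ hα0
      exact mul_left_cancel₀ hne (by rw [mul_one]; exact heq.symm)
    have h2 : n ∣ ν * b * ((cols t : ℕ) - (cols s : ℕ)) := hdvd _ h1
    rw [← hn] at h2
    have h3 : (r + δ - 1) ∣ b * ((cols t : ℕ) - (cols s : ℕ)) := by
      have : ν * (r + δ - 1) ∣ ν * (b * ((cols t : ℕ) - (cols s : ℕ))) := by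
        rw [← mul_assoc]; exact h2
      exact (Nat.mul_dvd_mul_iff_left hν0).mp this
    have h4 : (r + δ - 1) ∣ ((cols t : ℕ) - (cols s : ℕ)) :=
      (Nat.Coprime.dvd_of_dvd_mul_left (Nat.Coprime.symm hbm)) h3
    have h5 : (cols t : ℕ) - (cols s : ℕ) < r + δ - 1 := by
      have := (cols t).isLt
      omega
    have := Nat.eq_zero_of_dvd_of_lt h4 |>.mt
    have h6 : (cols t : ℕ) - (cols s : ℕ) = 0 := by
      by_contra hne
      exact absurd h5 (not_lt.mpr (Nat.le_of_dvd (Nat.pos_of_ne_zero hne) h4))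
    omega
  have hxinj : Function.Injective x := by
    intro s t hst
    apply hcols
    simp only [hx, ← pow_mul] at hst
    apply Fin.ext
    rcases le_total (cols s : ℕ) (cols t : ℕ) with h | h
    · exact key s t h hst
    · exact (key t s h hst.symm).symm
  have hMeq : (Matrix.of fun jj s : Fin (δ - 1) =>
        (α ^ (ν * (i1 + (jj : ℕ) * b))) ^ ((cols s : ℕ)))
      = (Matrix.vandermonde x).transpose * Matrix.diagonal c := by
    ext jj s
    simp only [Matrix.mul_apply, Matrix.diagonal_apply, Matrix.transpose_apply,
      Matrix.vandermonde_apply, Matrix.of_apply, mul_ite, mul_zero]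
    rw [Finset.sum_ite_eq' Finset.univ s (fun k => x k ^ (jj : ℕ) * c k)]
    simp only [Finset.mem_univ, if_true, hx, hc]
    rw [← pow_mul, ← pow_mul, ← pow_mul, ← pow_mul, ← pow_add]
    congr 1
    ring
  rw [hMeq, Matrix.det_mul, Matrix.det_transpose, Matrix.det_diagonal]
  apply mul_ne_zero
  · exact Matrix.det_vandermonde_ne_zero_iff.mpr hxinj
  · exact Finset.prod_ne_zero_iff.mpr fun s _ => pow_ne_zero _ (pow_ne_zero _ hα0)
end

section
/- Let n, k, r be positive integers with n odd, (r+1) | n, r | k, and μ = k/r even with 2 ≤ μ ≤ n/(r+1). Let b be odd with gcd(b,n)=1. Define subsets of Z/nZ: D = {±((n-b)/2 - t·b) mod n : t = 0, 1, ..., (n-k-μ-1)/2} and L = {i ∈ Z/nZ : i ≡ 0 (mod r+1)}. Then |D| = n - k - μ + 1, |L ∩ D| = n/(r+1) - μ + 1, and |L ∪ D| = n - k. -/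
open Finset

/-- For odd `n`, `(r+1) ∣ n`, `k = μr` with `μ` even, `2 ≤ μ ≤ n/(r+1)`,
`k + μ < n`, and odd `b` with `gcd(b,n)=1`: the set
`D = {±((n-b)/2 - t·b) : t = 0,…,(n-k-μ-1)/2}` and the coset
`L = {i : i ≡ 0 (mod r+1)}` satisfy `|D| = n-k-μ+1`,
`|L ∩ D| = n/(r+1) - μ + 1`, and `|L ∪ D| = n-k`. -/
theorem stmt12 (n k r μ b : ℕ) [NeZero n] (hodd : Odd n) (hr : 0 < r)
    (hdvd : (r + 1) ∣ n) (hk : k = μ * r) (hμe : Even μ) (hμ1 : 2 ≤ μ)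
    (hμ2 : μ ≤ n / (r + 1)) (hkn : k + μ < n)
    (hbo : Odd b) (hb : Nat.Coprime b n) :
    ∀ D L : Finset (ZMod n),
      D = ((Finset.range ((n - k - μ - 1) / 2 + 1)).image
            (fun t : ℕ => ((((n : ℤ) - (b : ℤ)) / 2 - (t : ℤ) * (b : ℤ) : ℤ) : ZMod n))) ∪
          ((Finset.range ((n - k - μ - 1) / 2 + 1)).image
            (fun t : ℕ => ((-(((n : ℤ) - (b : ℤ)) / 2 - (t : ℤ) * (b : ℤ)) : ℤ) : ZMod n))) →
      L = Finset.univ.filter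
            (fun x : ZMod n => ZMod.castHom hdvd (ZMod (r + 1)) x = 0) →
      D.card = n - k - μ + 1 ∧
      (L ∩ D).card = n / (r + 1) - μ + 1 ∧
      (L ∪ D).card = n - k := by
  intro D L hD hL
  have hn0 : 0 < n := Nat.pos_of_ne_zero (NeZero.ne n)
  have hno : n % 2 = 1 := Nat.odd_iff.mp hodd
  have hbo' : b % 2 = 1 := Nat.odd_iff.mp hbo
  set N : ℕ := n - k - μ with hNdef
  set M : ℕ := (N - 1) / 2 with hMdef
  have hkμe : Even (k + μ) := by
    rcases hμe with ⟨m, hm⟩; exact ⟨m * r + m, by subst hk hm; ring⟩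
  have hN : N = 2 * M + 1 := by rcases hkμe with ⟨m, hm⟩; omega
  set q : ℕ := n / (r + 1) with hqdef
  have hq : q * (r + 1) = n := Nat.div_mul_cancel hdvd
  have hro : Odd (r + 1) := by
    rcases hdvd with ⟨c, hc⟩
    have hcodd : Odd ((r + 1) * c) := hc ▸ hodd
    exact (Nat.odd_mul.mp hcodd).1
  have hro' : (r + 1) % 2 = 1 := Nat.odd_iff.mp hro
  have hkμ : μ * (r + 1) = k + μ := by rw [hk]; ring
  have hNq : N = (q - μ) * (r + 1) := by rw [Nat.sub_mul, hkμ, hq]; omega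
  have hbr : Nat.Coprime b (r + 1) := Nat.Coprime.coprime_dvd_right hdvd hb
  have hhalf : 2 * (((n : ℤ) - b) / 2) = (n : ℤ) - b := by
    rw [mul_comm]; exact Int.ediv_mul_cancel (by omega)
  set F : ℕ → ℤ := fun i => ((n : ℤ) - b) / 2 + ((i : ℤ) - (M : ℤ)) * b with hF
  set f : ℕ → ZMod n := fun i => ((F i : ℤ) : ZMod n) with hf
  -- key pointwise identities
  have key1 : ∀ t : ℕ, t ≤ M →
      f (M - t) = ((((n : ℤ) - b) / 2 - (t : ℤ) * b : ℤ) : ZMod n) := by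
    intro t ht
    have hc : ((M - t : ℕ) : ℤ) = (M : ℤ) - t := by omega
    show ((((n : ℤ) - b) / 2 + (((M - t : ℕ) : ℤ) - (M : ℤ)) * b : ℤ) : ZMod n) = _
    rw [hc]
    congr 1
    ring
  have key2 : ∀ t : ℕ,
      f (M + 1 + t) = ((-(((n : ℤ) - b) / 2 - (t : ℤ) * b) : ℤ) : ZMod n) := by
    intro t
    show ((((n : ℤ) - b) / 2 + (((M + 1 + t : ℕ) : ℤ) - (M : ℤ)) * b : ℤ) : ZMod n) = _
    rw [ZMod.intCast_eq_intCast_iff, Int.modEq_iff_dvd]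
    refine ⟨-1, ?_⟩
    push_cast
    linear_combination -hhalf
  have hcopn : IsCoprime (n : ℤ) (b : ℤ) := Nat.isCoprime_iff_coprime.mpr hb.symm
  have hinj : Set.InjOn f (Finset.range (N + 1)) := by
    intro i hi j hj hij
    simp only [Finset.coe_range, Set.mem_Iio] at hi hj
    have h1 : F i ≡ F j [ZMOD (n : ℤ)] := by
      exact (ZMod.intCast_eq_intCast_iff _ _ _).mp hij
    have h2 : (n : ℤ) ∣ (F j - F i) := h1.dvd
    have h3 : F j - F i = ((j : ℤ) - i) * b := by rw [hF]; ring
    rw [h3] at h2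
    have h4 : (n : ℤ) ∣ ((j : ℤ) - i) := hcopn.dvd_of_dvd_mul_right h2
    have h5 : ((j : ℤ) - i) = 0 :=
      Int.eq_zero_of_abs_lt_dvd h4 (abs_lt.mpr ⟨by omega, by omega⟩)
    omega
  have hDimg : D = (Finset.range (N + 1)).image f := by
    rw [hD]
    ext x
    simp only [Finset.mem_union, Finset.mem_image, Finset.mem_range]
    constructor
    · rintro (⟨t, ht, rfl⟩ | ⟨t, ht, rfl⟩)
      · exact ⟨M - t, by omega, key1 t (by omega)⟩
      · exact ⟨M + 1 + t, by omega, key2 t⟩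
    · rintro ⟨i, hi, rfl⟩
      by_cases hiM : i ≤ M
      · left
        have h := key1 (M - i) (by omega)
        rw [Nat.sub_sub_self hiM] at h
        exact ⟨M - i, by omega, h.symm⟩
      · right
        have h := key2 (i - (M + 1))
        rw [show M + 1 + (i - (M + 1)) = i from by omega] at h
        exact ⟨i - (M + 1), by omega, h.symm⟩
  have hLmem : ∀ x : ZMod n, x ∈ L ↔ ZMod.castHom hdvd (ZMod (r + 1)) x = 0 := by
    intro x; rw [hL, Finset.mem_filter]; simp
  have icop2 : IsCoprime ((r + 1 : ℕ) : ℤ) (2 : ℤ) := by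
    have : Nat.Coprime (r + 1) 2 := by
      exact Nat.coprime_two_right.mpr hro
    exact_mod_cast Nat.isCoprime_iff_coprime.mpr this
  have icopb : IsCoprime ((r + 1 : ℕ) : ℤ) ((b : ℕ) : ℤ) :=
    Nat.isCoprime_iff_coprime.mpr hbr.symm
  have hdn : ((r + 1 : ℕ) : ℤ) ∣ (n : ℤ) := Int.natCast_dvd_natCast.mpr hdvd
  have hdN : ((r + 1 : ℕ) : ℤ) ∣ (N : ℤ) :=
    Int.natCast_dvd_natCast.mpr ⟨q - μ, by rw [hNq]; ring⟩
  have hNZ : (N : ℤ) = 2 * (M : ℤ) + 1 := by exact_mod_cast hN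
  have h2F : ∀ i : ℕ, 2 * F i = (n : ℤ) + (2 * (i : ℤ) - N) * b := by
    intro i
    show 2 * (((n : ℤ) - b) / 2 + ((i : ℤ) - (M : ℤ)) * b) = _
    linear_combination hhalf + (b : ℤ) * hNZ
  have hfL : ∀ i : ℕ, ZMod.castHom hdvd (ZMod (r + 1)) (f i) = 0 ↔ (r + 1) ∣ i := by
    intro i
    have h1 : ZMod.castHom hdvd (ZMod (r + 1)) (f i) = ((F i : ℤ) : ZMod (r + 1)) :=
      map_intCast _ _
    rw [h1, ZMod.intCast_zmod_eq_zero_iff_dvd]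
    have step1 : ((r + 1 : ℕ) : ℤ) ∣ F i ↔ ((r + 1 : ℕ) : ℤ) ∣ 2 * F i :=
      ⟨fun h => h.mul_left 2, fun h => icop2.dvd_of_dvd_mul_left h⟩
    have hdiff : ((r + 1 : ℕ) : ℤ) ∣ ((n : ℤ) - (N : ℤ) * b) :=
      dvd_sub hdn (hdN.mul_right b)
    have step2 : ((r + 1 : ℕ) : ℤ) ∣ 2 * F i ↔ ((r + 1 : ℕ) : ℤ) ∣ 2 * (i : ℤ) * b := by
      constructor
      · intro h
        have := dvd_sub h hdiff
        rwa [show 2 * F i - ((n : ℤ) - (N : ℤ) * b) = 2 * (i : ℤ) * b from by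
          linear_combination h2F i] at this
      · intro h
        have := dvd_add h hdiff
        rwa [show 2 * (i : ℤ) * b + ((n : ℤ) - (N : ℤ) * b) = 2 * F i from by
          linear_combination - h2F i] at this
    have step3 : ((r + 1 : ℕ) : ℤ) ∣ 2 * (i : ℤ) * b ↔ ((r + 1 : ℕ) : ℤ) ∣ (i : ℤ) := by
      constructor
      · intro h
        have h' : ((r + 1 : ℕ) : ℤ) ∣ 2 * (i : ℤ) := icopb.dvd_of_dvd_mul_right h
        exact icop2.dvd_of_dvd_mul_left h'
      · intro h
        exact (h.mul_left 2).mul_right b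
    have final : ((r + 1 : ℕ) : ℤ) ∣ (i : ℤ) ↔ (r + 1) ∣ i := Int.natCast_dvd_natCast
    rw [step1, step2, step3, final]
  -- L ∩ D as image of filtered range
  have hLD : L ∩ D = ((Finset.range (N + 1)).filter (fun i => (r + 1) ∣ i)).image f := by
    rw [hDimg]
    ext x
    simp only [Finset.mem_inter, Finset.mem_image, Finset.mem_filter, Finset.mem_range]
    constructor
    · rintro ⟨hxL, i, hi, rfl⟩
      exact ⟨i, ⟨hi, (hfL i).mp ((hLmem _).mp hxL)⟩, rfl⟩
    · rintro ⟨i, ⟨hi, hdvdi⟩, rfl⟩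
      exact ⟨(hLmem _).mpr ((hfL i).mpr hdvdi), i, hi, rfl⟩
  -- count of multiples of r+1 in range (N+1)
  have hcount : ((Finset.range (N + 1)).filter (fun i => (r + 1) ∣ i)).card = (q - μ) + 1 := by
    have himg : (Finset.range (N + 1)).filter (fun i => (r + 1) ∣ i)
        = (Finset.range (q - μ + 1)).image (fun j => j * (r + 1)) := by
      ext i
      simp only [Finset.mem_filter, Finset.mem_range, Finset.mem_image]
      constructor
      · rintro ⟨hi, j, rfl⟩
        refine ⟨j, ?_, mul_comm _ _⟩
        have h1 : (r + 1) * j ≤ (r + 1) * (q - μ) := by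
          rw [mul_comm (r + 1) (q - μ), ← hNq]; omega
        have := Nat.le_of_mul_le_mul_left h1 (by omega)
        omega
      · rintro ⟨j, hj, rfl⟩
        refine ⟨?_, ⟨j, mul_comm _ _⟩⟩
        have h1 : j * (r + 1) ≤ (q - μ) * (r + 1) :=
          Nat.mul_le_mul_right _ (by omega)
        rw [← hNq] at h1
        omega
    rw [himg, Finset.card_image_of_injOn, Finset.card_range]
    intro a _ c _ h
    exact Nat.eq_of_mul_eq_mul_right (by omega) h
  have hLDcard : (L ∩ D).card = q - μ + 1 := by
    rw [hLD, Finset.card_image_of_injOn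
      (hinj.mono (Finset.coe_subset.mpr (Finset.filter_subset _ _))), hcount]
  have hDcard : D.card = N + 1 := by
    rw [hDimg, Finset.card_image_of_injOn hinj, Finset.card_range]
  -- card of L
  have hLcard : L.card = q := by
    have hLimg : L = (Finset.range q).image (fun j => ((j * (r + 1) : ℕ) : ZMod n)) := by
      ext x
      rw [hLmem]
      simp only [Finset.mem_image, Finset.mem_range]
      constructor
      · intro hx
        have hval : ((x.val : ℕ) : ZMod n) = x := ZMod.natCast_rightInverse x
        have hx' : ((x.val : ℕ) : ZMod (r + 1)) = 0 := by
          rw [← map_natCast (ZMod.castHom hdvd (ZMod (r + 1))) x.val, hval]; exact hx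
        rw [ZMod.natCast_eq_zero_iff] at hx'
        obtain ⟨j, hj⟩ := hx'
        have hxv : x.val < n := ZMod.val_lt x
        refine ⟨j, ?_, ?_⟩
        · by_contra hjq
          push_neg at hjq
          have h1 : (r + 1) * q ≤ (r + 1) * j := Nat.mul_le_mul_left _ hjq
          have h2 : (r + 1) * q = q * (r + 1) := mul_comm _ _
          omega
        · rw [mul_comm, ← hj, hval]
      · rintro ⟨j, hj, rfl⟩
        rw [map_natCast, ZMod.natCast_eq_zero_iff]
        exact ⟨j, mul_comm _ _⟩
    rw [hLimg, Finset.card_image_of_injOn, Finset.card_range]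
    intro a ha c hc h
    simp only [Finset.coe_range, Set.mem_Iio] at ha hc
    have h' : ((a * (r + 1) : ℕ) : ZMod n) = ((c * (r + 1) : ℕ) : ZMod n) := h
    have hlt : ∀ e : ℕ, e < q → e * (r + 1) < n := by
      intro e he
      have h1 : (e + 1) * (r + 1) ≤ q * (r + 1) := Nat.mul_le_mul_right _ (by omega)
      have h2 : (e + 1) * (r + 1) = e * (r + 1) + (r + 1) := by ring
      omega
    have hv : ((a * (r + 1) : ℕ) : ZMod n).val = ((c * (r + 1) : ℕ) : ZMod n).val := by
      rw [h']
    rw [ZMod.val_cast_of_lt (hlt a ha), ZMod.val_cast_of_lt (hlt c hc)] at hv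
    exact Nat.eq_of_mul_eq_mul_right (by omega) hv
  have hUnion := Finset.card_union_add_card_inter L D
  refine ⟨?_, ?_, ?_⟩
  · rw [hDcard]
  · rw [hLDcard]
  · rw [hLcard, hDcard, hLDcard] at hUnion
    omega
end

section
/- Let n, k, r be positive integers with n odd, (r+1) | n, r | k, and μ = k/r odd with 1 ≤ μ ≤ n/(r+1). Let b be a positive integer with gcd(b,n)=1. Define subsets of Z/nZ: D = {0} ∪ {±(t·b) mod n : t = 1, ..., (n-k-μ)/2} and L = {i ∈ Z/nZ : i ≡ 0 (mod r+1)}. Then |D| = n - k - μ + 1, |L ∩ D| = n/(r+1) - μ + 1, and |L ∪ D| = n - k. -/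
open Finset

/-- For odd `n`, `(r+1) ∣ n`, `k = μr` with `μ` odd, `1 ≤ μ ≤ n/(r+1)`, and
`b > 0` with `gcd(b,n)=1`: the set `D = {0} ∪ {±t·b : t = 1,…,(n-k-μ)/2}` and
the coset `L = {i : i ≡ 0 (mod r+1)}` satisfy `|D| = n-k-μ+1`,
`|L ∩ D| = n/(r+1) - μ + 1`, and `|L ∪ D| = n-k`. -/
theorem stmt13 (n k r μ b : ℕ) [NeZero n] (hodd : Odd n) (hr : 0 < r)
    (hdvd : (r + 1) ∣ n) (hk : k = μ * r) (hμo : Odd μ) (hμ1 : 1 ≤ μ)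
    (hμ2 : μ ≤ n / (r + 1)) (hb0 : 0 < b) (hb : Nat.Coprime b n) :
    ∀ D L : Finset (ZMod n),
      D = {(0 : ZMod n)} ∪
          ((Finset.Icc 1 ((n - k - μ) / 2)).image
            (fun t => ((t * b : ℕ) : ZMod n))) ∪
          ((Finset.Icc 1 ((n - k - μ) / 2)).image
            (fun t => -((t * b : ℕ) : ZMod n))) →
      L = Finset.univ.filter
            (fun x : ZMod n => ZMod.castHom hdvd (ZMod (r + 1)) x = 0) →
      D.card = n - k - μ + 1 ∧
      (L ∩ D).card = n / (r + 1) - μ + 1 ∧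
      (L ∪ D).card = n - k := by
  intro D L hD hL
  set m : ℕ := r + 1 with hmdef
  obtain ⟨q, hq⟩ := hdvd
  have hn0 : 0 < n := Nat.pos_of_ne_zero (NeZero.ne n)
  -- parities
  have hmq2 : m % 2 = 1 ∧ q % 2 = 1 := by
    have h1 := Nat.odd_iff.mp hodd
    rw [hq, Nat.mul_mod] at h1
    rcases Nat.mod_two_eq_zero_or_one m with h | h <;>
      rcases Nat.mod_two_eq_zero_or_one q with h' | h' <;>
      simp [h, h'] at h1 ⊢
  have hq0 : 0 < q := by
    rcases Nat.eq_zero_or_pos q with h | h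
    · subst h; simp at hq; omega
    · exact h
  have hnq : n / m = q := by rw [hq, Nat.mul_div_cancel_left _ (by omega : 0 < m)]
  have hμq : μ ≤ q := by rwa [hnq] at hμ2
  -- c = k + μ = μ * m
  have hkc : k + μ = μ * m := by rw [hk, hmdef]; ring
  have hcle : k + μ ≤ n := by
    rw [hkc, hq]; exact Nat.mul_le_mul_right m hμq |>.trans (by rw [Nat.mul_comm])
  -- h and s
  have hμ2' := Nat.odd_iff.mp hμo
  obtain ⟨h, hhdef⟩ : ∃ h : ℕ, h = (q - μ) / 2 := ⟨_, rfl⟩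
  have hh : 2 * h + μ = q := by omega
  obtain ⟨s, hsdef⟩ : ∃ s : ℕ, s = m * h := ⟨_, rfl⟩
  have hs2 : 2 * s + (k + μ) = n := by
    rw [hsdef, hkc, hq]
    have : 2 * (m * h) + μ * m = m * (2 * h + μ) := by ring
    rw [this, hh]
  have hIcc : (n - k - μ) / 2 = s := by omega
  have h2s : 2 * s < n := by omega
  -- b is a unit mod n and mod m
  haveI : NeZero m := ⟨by omega⟩
  have hbu : IsUnit (b : ZMod n) := (ZMod.isUnit_iff_coprime b n).mpr hb
  have hbm : Nat.Coprime b m := Nat.Coprime.coprime_dvd_right ⟨q, hq⟩ hb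
  have hbum : IsUnit (b : ZMod m) := (ZMod.isUnit_iff_coprime b m).mpr hbm
  -- the map
  set g : ℤ → ZMod n := fun t => (t : ZMod n) * (b : ZMod n) with hgdef
  -- D as image of integer interval
  have hD' : D = (Finset.Icc (-(s : ℤ)) (s : ℤ)).image g := by
    rw [hD, hIcc]
    ext x
    simp only [Finset.mem_union, Finset.mem_singleton, Finset.mem_image, Finset.mem_Icc, hgdef]
    constructor
    · rintro ((rfl | ⟨t, ⟨ht1, ht2⟩, rfl⟩) | ⟨t, ⟨ht1, ht2⟩, rfl⟩)
      · exact ⟨0, by simp, by simp⟩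
      · exact ⟨(t : ℤ), by constructor <;> omega, by push_cast; ring⟩
      · exact ⟨-(t : ℤ), by constructor <;> omega, by push_cast; ring⟩
    · rintro ⟨t, ⟨ht1, ht2⟩, rfl⟩
      rcases lt_trichotomy t 0 with h0 | h0 | h0
      · right
        refine ⟨t.natAbs, ⟨by omega, by omega⟩, ?_⟩
        have : (t.natAbs : ℤ) = -t := by omega
        push_cast
        rw [show ((t.natAbs : ℕ) : ZMod n) = ((t.natAbs : ℤ) : ZMod n) from
          (Int.cast_natCast _).symm, this]
        push_cast
        ring
      · left; left; simp [h0]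
      · left; right
        refine ⟨t.natAbs, ⟨by omega, by omega⟩, ?_⟩
        have : (t.natAbs : ℤ) = t := by omega
        push_cast
        rw [show ((t.natAbs : ℕ) : ZMod n) = ((t.natAbs : ℤ) : ZMod n) from
          (Int.cast_natCast _).symm, this]

  -- injectivity
  have hinj : Set.InjOn g (Finset.Icc (-(s : ℤ)) (s : ℤ)) := by
    intro t1 h1 t2 h2 heq
    simp only [Finset.coe_Icc, Set.mem_Icc] at h1 h2
    simp only [hgdef] at heq
    rw [mul_comm (t1 : ZMod n), mul_comm (t2 : ZMod n)] at heq
    have := hbu.mul_left_cancel heq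
    have hdvd' : (n : ℤ) ∣ t1 - t2 := by
      rwa [← ZMod.intCast_zmod_eq_zero_iff_dvd, Int.cast_sub, sub_eq_zero]
    have : t1 - t2 = 0 := Int.eq_zero_of_abs_lt_dvd hdvd' (by
      rw [abs_lt]; omega)
    omega
  have hcardIcc : (Finset.Icc (-(s : ℤ)) (s : ℤ)).card = 2 * s + 1 := by
    rw [Int.card_Icc]; omega
  have hDcard : D.card = 2 * s + 1 := by
    rw [hD', Finset.card_image_of_injOn hinj, hcardIcc]
  -- membership in L criterion
  have hLmem : ∀ t : ℤ, g t ∈ L ↔ (m : ℤ) ∣ t := by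
    intro t
    rw [hL]
    simp only [Finset.mem_filter, Finset.mem_univ, true_and, hgdef]
    rw [map_mul, map_intCast, map_natCast]
    constructor
    · intro hx
      have hx' : (b : ZMod m) * (t : ZMod m) = (b : ZMod m) * 0 := by
        rw [mul_zero, mul_comm]; exact hx
      have := hbum.mul_left_cancel hx'
      rwa [ZMod.intCast_zmod_eq_zero_iff_dvd] at this
    · intro hx
      rw [(ZMod.intCast_zmod_eq_zero_iff_dvd t m).mpr hx, zero_mul]
  -- L ∩ D
  have hLD : L ∩ D = ((Finset.Icc (-(s : ℤ)) (s : ℤ)).filter (fun t => (m : ℤ) ∣ t)).image g := by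
    rw [hD']
    ext x
    simp only [Finset.mem_inter, Finset.mem_image, Finset.mem_filter]
    constructor
    · rintro ⟨hxL, t, ht, rfl⟩
      exact ⟨t, ⟨ht, (hLmem t).mp hxL⟩, rfl⟩
    · rintro ⟨t, ⟨ht, hdt⟩, rfl⟩
      exact ⟨(hLmem t).mpr hdt, t, ht, rfl⟩
  have hfilter : (Finset.Icc (-(s : ℤ)) (s : ℤ)).filter (fun t => (m : ℤ) ∣ t)
      = (Finset.Icc (-(h : ℤ)) (h : ℤ)).image (fun j : ℤ => j * (m : ℤ)) := by
    ext t
    simp only [Finset.mem_filter, Finset.mem_Icc, Finset.mem_image]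
    have hm0 : (0 : ℤ) < m := by exact_mod_cast Nat.pos_of_ne_zero (by omega)
    have hs' : (s : ℤ) = (m : ℤ) * (h : ℤ) := by rw [hsdef]; push_cast; ring
    constructor
    · rintro ⟨⟨ht1, ht2⟩, j, rfl⟩
      refine ⟨j, ⟨?_, ?_⟩, by ring⟩
      · have h1 : (m : ℤ) * (-(h : ℤ)) ≤ (m : ℤ) * j := by
          rw [mul_neg, ← hs']; exact ht1
        have := le_of_mul_le_mul_left h1 hm0
        linarith
      · have h1 : (m : ℤ) * j ≤ (m : ℤ) * (h : ℤ) := by rw [← hs']; exact ht2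
        exact le_of_mul_le_mul_left h1 hm0
    · rintro ⟨j, ⟨hj1, hj2⟩, rfl⟩
      refine ⟨⟨?_, ?_⟩, ⟨j, by ring⟩⟩
      · rw [hs']
        have h1 : (m : ℤ) * (-(h : ℤ)) ≤ (m : ℤ) * j :=
          mul_le_mul_of_nonneg_left (by linarith) (le_of_lt hm0)
        linarith [h1]
      · rw [hs']
        have h1 : (m : ℤ) * j ≤ (m : ℤ) * (h : ℤ) :=
          mul_le_mul_of_nonneg_left hj2 (le_of_lt hm0)
        linarith [h1]
  have hLDcard : (L ∩ D).card = 2 * h + 1 := by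
    rw [hLD, hfilter, Finset.image_image]
    have : Set.InjOn (g ∘ fun j => j * (m : ℤ)) (Finset.Icc (-(h : ℤ)) (h : ℤ)) := by
      intro j1 h1 j2 h2 heq
      simp only [Finset.coe_Icc, Set.mem_Icc] at h1 h2
      have hm0 : (0 : ℤ) < m := by exact_mod_cast Nat.pos_of_ne_zero (by omega)
      have hs' : (s : ℤ) = (m : ℤ) * (h : ℤ) := by rw [hsdef]; push_cast; ring
      have key : ∀ j : ℤ, -(h : ℤ) ≤ j → j ≤ (h : ℤ) →
          (j * m : ℤ) ∈ (Finset.Icc (-(s : ℤ)) (s : ℤ)) := by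
        intro j hj1 hj2
        simp only [Finset.mem_Icc]
        constructor
        · have := mul_le_mul_of_nonneg_left hj1 (le_of_lt hm0)
          rw [hs']; linarith [this]
        · have := mul_le_mul_of_nonneg_left hj2 (le_of_lt hm0)
          rw [hs']; linarith [this]
      have hj1 : (j1 * m : ℤ) ∈ (Finset.Icc (-(s : ℤ)) (s : ℤ)) := key j1 h1.1 h1.2
      have hj2' : (j2 * m : ℤ) ∈ (Finset.Icc (-(s : ℤ)) (s : ℤ)) := key j2 h2.1 h2.2
      have := hinj hj1 hj2' heq
      have hm0 : (m : ℤ) ≠ 0 := by positivity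
      exact mul_right_cancel₀ hm0 this
    rw [Finset.card_image_of_injOn this, Int.card_Icc]
    omega
  -- card L
  have hLcard : L.card = q := by
    have hLeq : L = (Finset.range q).image (fun j : ℕ => ((m * j : ℕ) : ZMod n)) := by
      rw [hL]
      ext x
      simp only [Finset.mem_filter, Finset.mem_univ, true_and, Finset.mem_image,
        Finset.mem_range]
      constructor
      · intro hx
        have hxval : x = ((x.val : ℕ) : ZMod n) := by
          rw [ZMod.natCast_val, ZMod.cast_id]
        rw [hxval, map_natCast] at hx
        have hmdvd : m ∣ x.val := (ZMod.natCast_eq_zero_iff _ _).mp hx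
        obtain ⟨j, hj⟩ := hmdvd
        have hjq : j < q := by
          have hlt : m * j < m * q := by rw [← hj, ← hq]; exact ZMod.val_lt x
          exact Nat.lt_of_mul_lt_mul_left hlt
        refine ⟨j, hjq, ?_⟩
        rw [← hj]
        exact hxval.symm
      · rintro ⟨j, hj, rfl⟩
        rw [map_natCast, ZMod.natCast_eq_zero_iff]
        exact ⟨j, rfl⟩
    rw [hLeq, Finset.card_image_of_injOn, Finset.card_range]
    intro j1 h1 j2 h2 heq
    simp only [Finset.coe_range, Set.mem_Iio] at h1 h2
    have e1 : m * j1 < n := by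
      rw [hq]; exact Nat.mul_lt_mul_of_le_of_lt (le_refl m) h1 (by omega)
    have e2 : m * j2 < n := by
      rw [hq]; exact Nat.mul_lt_mul_of_le_of_lt (le_refl m) h2 (by omega)
    have heq' : ((m * j1 : ℕ) : ZMod n) = ((m * j2 : ℕ) : ZMod n) := heq
    have : m * j1 = m * j2 := by
      rw [← ZMod.val_cast_of_lt e1, ← ZMod.val_cast_of_lt e2, heq']
    exact Nat.eq_of_mul_eq_mul_left (by omega) this
  -- conclude
  have hLDU := Finset.card_union_add_card_inter L D
  refine ⟨by omega, by rw [hnq]; omega, by omega⟩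
end

section
/- (Nonexistence from Remark 7) Let n be odd, (r+1) | n with r ≥ 1, and 0 < l ≤ r. Suppose Z ⊆ Z/nZ is a union Z = L ∪ D where L = {i : i ≡ l (mod r+1)}, D is an arithmetic progression modulo n with common difference b satisfying gcd(b,n)=1, and Z is closed under negation (i.e., -Z = Z mod n). Then |D| ≥ n - r. -/
open Finset

/-- Nonexistence (Remark 7): for odd `n`, `(r+1) ∣ n`, `0 < l ≤ r`, if
`Z = L ∪ D` where `L = {i : i ≡ l (mod r+1)}` and `D` is an arithmetic
progression modulo `n` with common difference `b`, `gcd(b,n)=1`, and `Z` is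
closed under negation, then `|D| ≥ n - r`. -/
theorem stmt14 (n r l b N : ℕ) [NeZero n] (hodd : Odd n) (hr : 1 ≤ r)
    (hdvd : (r + 1) ∣ n) (hl1 : 0 < l) (hl2 : l ≤ r) (hb : Nat.Coprime b n)
    (a : ZMod n) (Z L D : Finset (ZMod n))
    (hL : L = Finset.univ.filter fun x : ZMod n =>
        ZMod.castHom hdvd (ZMod (r + 1)) x = (l : ZMod (r + 1)))
    (hD : D = (Finset.range N).image fun t : ℕ => a + (t : ZMod n) * (b : ZMod n))
    (hZ : Z = L ∪ D) (hneg : ∀ x ∈ Z, -x ∈ Z) :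
    n - r ≤ D.card := by
  have hrn : r + 1 ≤ n := Nat.le_of_dvd (Nat.pos_of_ne_zero (NeZero.ne n)) hdvd
  have hoddr : Odd (r + 1) := by
    rcases Nat.even_or_odd (r + 1) with he | ho
    · exfalso
      obtain ⟨k, hk⟩ := hdvd
      exact (Nat.not_even_iff_odd.mpr hodd) (hk ▸ he.mul_right k)
    · exact ho
  -- l ≠ -l in ZMod (r+1)
  have hne : (l : ZMod (r + 1)) ≠ -(l : ZMod (r + 1)) := by
    intro h
    have h2 : ((2 * l : ℕ) : ZMod (r + 1)) = 0 := by
      push_cast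
      linear_combination h
    rw [ZMod.natCast_eq_zero_iff] at h2
    have hco : Nat.Coprime (r + 1) 2 := hoddr.coprime_two_right
    have : (r + 1) ∣ l := hco.dvd_of_dvd_mul_left h2
    have := Nat.le_of_dvd hl1 this
    omega
  -- every x with cast x = -l lies in D
  have hS : ∀ x : ZMod n, ZMod.castHom hdvd (ZMod (r + 1)) x = -(l : ZMod (r + 1)) → x ∈ D := by
    intro x hx
    have hmemL : -x ∈ L := by
      rw [hL, mem_filter]
      refine ⟨mem_univ _, ?_⟩
      rw [map_neg, hx, neg_neg]
    have : -(-x) ∈ Z := hneg _ (by rw [hZ]; exact mem_union_left _ hmemL)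
    rw [neg_neg, hZ, mem_union] at this
    rcases this with h | h
    · exfalso
      rw [hL, mem_filter] at h
      exact hne (h.2.symm.trans hx)
    · exact h
  -- injectivity of t ↦ a + t*b on [0,n)
  have hbu : IsUnit (b : ZMod n) := (ZMod.isUnit_iff_coprime b n).mpr hb
  have hinj : ∀ t t' : ℕ, t < n → t' < n →
      a + (t : ZMod n) * b = a + (t' : ZMod n) * b → t = t' := by
    intro t t' ht ht' h
    have h1 : (t : ZMod n) * b = (t' : ZMod n) * b := by
      exact add_left_cancel h
    have h2 : (t : ZMod n) = (t' : ZMod n) := hbu.mul_right_cancel h1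
    have := congrArg ZMod.val h2
    rwa [ZMod.val_natCast_of_lt ht, ZMod.val_natCast_of_lt ht'] at this
  rcases lt_or_ge N n with hN | hN
  · -- N < n case
    have hb' : Nat.Coprime b (r + 1) := Nat.Coprime.coprime_dvd_right hdvd hb
    haveI : NeZero (r + 1) := ⟨by omega⟩
    set u : (ZMod (r + 1))ˣ := ZMod.unitOfCoprime b hb' with hu
    set c : ℕ := ((-(l : ZMod (r + 1)) - ZMod.castHom hdvd (ZMod (r + 1)) a) * (↑u⁻¹ : ZMod (r + 1))).val with hc
    have hclt : c < r + 1 := ZMod.val_lt _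
    set t : ℕ := n - (r + 1) + c with htdef
    have htlt : t < n := by omega
    have htmod : ((t : ℕ) : ZMod (r + 1)) = (c : ZMod (r + 1)) := by
      have : (r + 1) ∣ n - (r + 1) := (Nat.dvd_sub hdvd dvd_rfl)
      rw [htdef]
      push_cast
      rw [(ZMod.natCast_eq_zero_iff _ _).mpr this, zero_add]
    have hx : ZMod.castHom hdvd (ZMod (r + 1)) (a + (t : ZMod n) * b) = -(l : ZMod (r + 1)) := by
      rw [map_add, map_mul, map_natCast, map_natCast, htmod, hc]
      rw [ZMod.natCast_val, ZMod.cast_id]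
      have hub : (↑u : ZMod (r + 1)) = (b : ZMod (r + 1)) := ZMod.coe_unitOfCoprime b hb'
      rw [← hub, mul_assoc, Units.inv_mul, mul_one]
      ring
    have hmem : a + (t : ZMod n) * b ∈ D := hS _ hx
    rw [hD, mem_image] at hmem
    obtain ⟨t', ht', heq⟩ := hmem
    rw [mem_range] at ht'
    have : t' = t := hinj t' t (lt_trans ht' hN) htlt heq
    have hNt : n - r ≤ N := by omega
    have hcard : D.card = N := by
      rw [hD]
      rw [Finset.card_image_of_injOn, Finset.card_range]
      intro x hx' y hy' hxy
      rw [mem_coe, mem_range] at hx' hy'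
      exact hinj x y (lt_trans hx' hN) (lt_trans hy' hN) hxy
    omega
  · -- n ≤ N : D = univ
    have huniv : (Finset.univ : Finset (ZMod n)) ⊆ D := by
      intro x _
      rw [hD, mem_image]
      obtain ⟨v, hv⟩ := hbu.exists_right_inv
      refine ⟨((x - a) * v).val, mem_range.mpr (lt_of_lt_of_le (ZMod.val_lt _) hN), ?_⟩
      rw [ZMod.natCast_val, ZMod.cast_id, mul_assoc, mul_comm v, hv, mul_one]
      ring
    have := Finset.card_le_card huniv
    rw [Finset.card_univ, ZMod.card] at this
    omega
end

section
/- Let n, k, r, δ be positive integers with n odd, (r+δ-1) | n, r | k, δ even, μ = k/r even, and 2 ≤ μ ≤ ν' where ν' = n/(r+δ-1). Define subsets of Z/nZ: D = {±((n-1)/2 - t) mod n : t = 0, 1, ..., (n-k-(μ-1)(δ-1)-2)/2}, and L_m = {i ∈ Z/nZ : i ≡ m (mod r+δ-1)} for m ∈ {0, ±1, ±2, ..., ±(δ-2)/2} (with residues ±m taken modulo r+δ-1). Then |D| = n - k - (μ-1)(δ-1), |L_m ∩ D| = ν' - μ + 1 for each of the δ-1 values of m, and |(⋃_m L_m) ∪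 D| = n - k. -/
open Finset

private lemma zeq_of_dvd {s x y : ℤ} (hs : 0 < s) (hdvd : s ∣ x - y)
    (h1 : -s < x - y) (h2 : x - y < s) : x = y := by
  clear hs
  have := Int.eq_zero_of_abs_lt_dvd hdvd (abs_lt.mpr ⟨h1, h2⟩)
  omega

private lemma count_one_period (s A m : ℤ) (hs : 0 < s) :
    ((Finset.Ico A (A + s)).filter (fun j => j ≡ m [ZMOD s])).card = 1 := by
  have h1 := Int.emod_nonneg (m - A) hs.ne'
  have h2 := Int.emod_lt_of_pos (m - A) hs
  have h3 := Int.mul_ediv_add_emod (m - A) s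
  rw [Finset.card_eq_one]
  refine ⟨A + (m - A) % s, ?_⟩
  ext j
  simp only [Finset.mem_filter, Finset.mem_Ico, Finset.mem_singleton, Int.modEq_iff_dvd]
  constructor
  · rintro ⟨⟨hA, hA'⟩, c, hc⟩
    refine zeq_of_dvd hs ⟨(m - A) / s - c, ?_⟩ (by omega) (by omega)
    have hh : s * ((m - A) / s - c) = s * ((m - A) / s) - s * c := by ring
    omega
  · rintro rfl
    exact ⟨⟨by omega, by omega⟩, (m - A) / s, by omega⟩

private lemma count_periods (s m : ℤ) (hs : 0 < s) (c : ℕ) (A : ℤ) :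
    ((Finset.Ico A (A + c * s)).filter (fun j => j ≡ m [ZMOD s])).card = c := by
  induction c generalizing A with
  | zero => simp
  | succ c ih =>
    have hsplit : Finset.Ico A (A + (c + 1 : ℕ) * s) =
        Finset.Ico A (A + c * s) ∪ Finset.Ico (A + c * s) (A + c * s + s) := by
      rw [Finset.Ico_union_Ico_eq_Ico]
      · congr 1; push_cast; ring
      · have : (0:ℤ) ≤ c * s := by positivity
        omega
      · omega
    rw [hsplit, Finset.filter_union, Finset.card_union_of_disjoint
        (Finset.disjoint_filter_filter (Finset.Ico_disjoint_Ico_consecutive _ _ _)),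
      ih, count_one_period s _ m hs]

private lemma count_partial (s e A m : ℤ) (hs : 0 < s) (he : 0 ≤ e) (hes : 2 * e < s)
    (hA : s ∣ A + e) (hm1 : -e ≤ m) (hm2 : m ≤ e) :
    ((Finset.Ico A (A + (2 * e + 1))).filter (fun j => j ≡ m [ZMOD s])).card = 1 := by
  rw [Finset.card_eq_one]
  refine ⟨A + e + m, ?_⟩
  obtain ⟨u, hu⟩ := hA
  ext j
  simp only [Finset.mem_filter, Finset.mem_Ico, Finset.mem_singleton, Int.modEq_iff_dvd]
  constructor
  · rintro ⟨⟨hA1, hA2⟩, c, hc⟩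
    refine zeq_of_dvd hs ⟨-c - u, ?_⟩ (by omega) (by omega)
    have : s * (-c - u) = -(s * c) - s * u := by ring
    omega
  · rintro rfl
    refine ⟨⟨by omega, by omega⟩, -u, ?_⟩
    rw [mul_neg, ← hu]
    ring

private lemma cast_injOn (n : ℕ) [NeZero n] {A B : ℤ} (h : B - A ≤ n) :
    Set.InjOn (fun j : ℤ => (j : ZMod n)) (Finset.Ico A B) := by
  have hn : 0 < n := Nat.pos_of_ne_zero (NeZero.ne n)
  intro x hx y hy hxy
  simp only [Finset.coe_Ico, Set.mem_Ico] at hx hy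
  have hxy' : (x : ZMod n) = (y : ZMod n) := hxy
  have h0 : ((x - y : ℤ) : ZMod n) = 0 := by push_cast; rw [hxy']; ring
  rw [ZMod.intCast_zmod_eq_zero_iff_dvd] at h0
  refine zeq_of_dvd (by exact_mod_cast hn) h0 (by omega) (by omega)

private lemma image_cast_shift (n : ℕ) (A B : ℤ) :
    (Finset.Ico A B).image (fun j : ℤ => (j : ZMod n)) =
    (Finset.Ico (A + n) (B + n)).image (fun j : ℤ => (j : ZMod n)) := by
  ext x
  simp only [Finset.mem_image, Finset.mem_Ico]
  constructor
  · rintro ⟨j, hj, rfl⟩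
    exact ⟨j + n, by omega, by push_cast; simp⟩
  · rintro ⟨j, hj, rfl⟩
    exact ⟨j - n, by omega, by push_cast; simp⟩

private lemma range_image_eq (n : ℕ) (c : ℤ) (T : ℕ) :
    (Finset.range T).image (fun t : ℕ => ((c - t : ℤ) : ZMod n)) =
    (Finset.Ico (c + 1 - T) (c + 1)).image (fun j : ℤ => (j : ZMod n)) := by
  ext x
  simp only [Finset.mem_image, Finset.mem_range, Finset.mem_Ico]
  constructor
  · rintro ⟨t, ht, rfl⟩
    exact ⟨c - t, by omega, rfl⟩
  · rintro ⟨j, hj, rfl⟩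
    refine ⟨(c - j).toNat, by omega, ?_⟩
    congr 1
    omega

private lemma range_image_eq_neg (n : ℕ) (c : ℤ) (T : ℕ) :
    (Finset.range T).image (fun t : ℕ => ((-(c - t) : ℤ) : ZMod n)) =
    (Finset.Ico (-c) (-c + T)).image (fun j : ℤ => (j : ZMod n)) := by
  ext x
  simp only [Finset.mem_image, Finset.mem_range, Finset.mem_Ico]
  constructor
  · rintro ⟨t, ht, rfl⟩
    exact ⟨-c + t, by omega, by congr 1; ring⟩
  · rintro ⟨j, hj, rfl⟩
    refine ⟨(c + j).toNat, by omega, ?_⟩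
    congr 1
    omega


/-- Counting for Construction 2: for odd `n`, even `δ ≥ 2`, `(r+δ-1) ∣ n`,
`k = μr` with `μ` even, `2 ≤ μ ≤ ν' = n/(r+δ-1)`: with
`D = {±((n-1)/2 - t) : t = 0,…,(n-k-(μ-1)(δ-1)-2)/2}` and cosets
`L_m = {i : i ≡ m (mod r+δ-1)}` for `m ∈ {0,±1,…,±(δ-2)/2}`, one has
`|D| = n-k-(μ-1)(δ-1)`, `|L_m ∩ D| = ν'-μ+1` for each such `m`, and
`|(⋃_m L_m) ∪ D| = n-k`. -/
theorem stmt16 (n k r δ μ : ℕ) [NeZero n] (hodd : Odd n) (hr : 0 < r)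
    (hδ : 2 ≤ δ) (hδe : Even δ) (hdvd : (r + δ - 1) ∣ n) (hk : k = μ * r)
    (hμe : Even μ) (hμ1 : 2 ≤ μ) (hμ2 : μ ≤ n / (r + δ - 1)) :
    ∀ D : Finset (ZMod n), ∀ L : ℤ → Finset (ZMod n),
      D = ((Finset.range ((n - k - (μ - 1) * (δ - 1) - 2) / 2 + 1)).image
            (fun t : ℕ => ((((n : ℤ) - 1) / 2 - (t : ℤ) : ℤ) : ZMod n))) ∪
          ((Finset.range ((n - k - (μ - 1) * (δ - 1) - 2) / 2 + 1)).image
            (fun t : ℕ => ((-(((n : ℤ) - 1) / 2 - (t : ℤ)) : ℤ) : ZMod n))) →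
      (∀ m : ℤ, L m = Finset.univ.filter fun x : ZMod n =>
          ZMod.castHom hdvd (ZMod (r + δ - 1)) x = (m : ZMod (r + δ - 1))) →
      D.card = n - k - (μ - 1) * (δ - 1) ∧
      (∀ m ∈ Finset.Icc (-(((δ : ℤ) - 2) / 2)) (((δ : ℤ) - 2) / 2),
        (L m ∩ D).card = n / (r + δ - 1) - μ + 1) ∧
      ((Finset.Icc (-(((δ : ℤ) - 2) / 2)) (((δ : ℤ) - 2) / 2)).biUnion
          (fun m => L m) ∪ D).card = n - k := by
  intro D L hD hL
  obtain ⟨h, hn2⟩ := hodd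
  obtain ⟨d, hd2⟩ := hδe
  obtain ⟨p, hp2⟩ := hμe
  have hd1 : 1 ≤ d := by omega
  have hp1 : 1 ≤ p := by omega
  set e := r + δ - 1 with hse
  have he : e + 1 = r + δ := by omega
  have he2d : 2 * d ≤ e := by omega
  have he1 : 1 ≤ e := by omega
  set ν := n / e with hν
  have hnν : n = ν * e := (Nat.div_mul_cancel hdvd).symm
  have hνμ : μ ≤ ν := hμ2
  set QQ := (μ - 1) * (δ - 1) with hQQ
  -- key algebraic identity
  have hQ : k + QQ + (δ - 1) = μ * e := by
    have hkz : (k : ℤ) = (μ : ℤ) * r := by exact_mod_cast hk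
    rw [hQQ]
    zify [show 1 ≤ μ by omega, show 1 ≤ δ by omega, show 1 ≤ r + δ by omega, hse]
    linear_combination hkz
  have hμs : μ * e ≤ n := by rw [hnν]; exact Nat.mul_le_mul_right _ hνμ
  set N := n - k - QQ with hN
  have hNn : N + (k + QQ) = n := by omega
  set C := ν - μ with hC
  have hsub : C * e = ν * e - μ * e := Nat.sub_mul ν μ e
  have hNeq : N = C * e + (δ - 1) := by omega
  have hke : k = 2 * (p * r) := by rw [hk, hp2]; ring
  have hQodd : Odd QQ :=
    (Nat.Even.sub_odd (by omega) ⟨p, hp2⟩ odd_one).mul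
      (Nat.Even.sub_odd (by omega) ⟨d, hd2⟩ odd_one)
  obtain ⟨q, hq⟩ := hQodd
  set T := (n - k - QQ - 2) / 2 + 1 with hT
  have h2T : 2 * T = N := by omega
  set AA : ℤ := (h : ℤ) + 1 - (T : ℤ) with hAA
  set BB : ℤ := (h : ℤ) + 1 + (T : ℤ) with hBB
  have hnz : (n : ℤ) = 2 * (h : ℤ) + 1 := by exact_mod_cast hn2
  have hNn2 : N ≤ n := by omega
  -- integer versions of the key identities
  have H1 : (N : ℤ) = (C : ℤ) * (e : ℤ) + (δ : ℤ) - 1 := by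
    have := hNeq
    zify [show 1 ≤ δ by omega] at this
    linarith
  have H2 : (n : ℤ) = (ν : ℤ) * (e : ℤ) := by exact_mod_cast hnν
  have H3 : (k : ℤ) = (μ : ℤ) * (r : ℤ) := by exact_mod_cast hk
  have H4 : (e : ℤ) = (r : ℤ) + (δ : ℤ) - 1 := by
    have : ((e : ℕ) : ℤ) + 1 = (r : ℤ) + δ := by exact_mod_cast he
    omega
  have H5 : (δ : ℤ) = 2 * (d : ℤ) := by omega
  have H6 : (ν : ℤ) = (C : ℤ) + (μ : ℤ) := by omega
  have H7 : (μ : ℤ) = 2 * (p : ℤ) := by omega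
  have HQz : (k : ℤ) + (QQ : ℤ) + (δ : ℤ) - 1 = (μ : ℤ) * (e : ℤ) := by
    have := hQ
    zify [show 1 ≤ δ by omega] at this
    linarith
  have HNz : (N : ℤ) + ((k : ℤ) + (QQ : ℤ)) = (n : ℤ) := by exact_mod_cast hNn
  have H2T : (2 : ℤ) * (T : ℤ) = (N : ℤ) := by exact_mod_cast h2T
  -- rewrite D as the image of an interval
  have hn1 : ((n : ℤ) - 1) / 2 = (h : ℤ) := by omega
  simp only [hn1] at hD
  rw [range_image_eq n (h : ℤ) T, range_image_eq_neg n (h : ℤ) T,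
    image_cast_shift n (-(h : ℤ)) (-(h : ℤ) + T),
    show -(h : ℤ) + n = (h : ℤ) + 1 by omega,
    show -(h : ℤ) + (T : ℤ) + (n : ℤ) = (h : ℤ) + 1 + T by omega,
    ← Finset.image_union,
    Finset.Ico_union_Ico_eq_Ico (by omega) (by omega)] at hD
  have hinj : Set.InjOn (fun j : ℤ => (j : ZMod n)) (Finset.Ico AA BB) :=
    cast_injOn n (by push_cast; omega)
  have hDcard : D.card = N := by
    rw [hD, Finset.card_image_of_injOn hinj, Int.card_Ico]
    omega
  -- value of AA mod e
  have hApd : AA + ((d : ℤ) - 1) = (p : ℤ) * (e : ℤ) := by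
    have hμez : (μ : ℤ) * (e : ℤ) = 2 * ((p : ℤ) * (e : ℤ)) := by
      rw [H7]; ring
    omega
  -- the coset-interval counting
  have hcount : ∀ m : ℤ, -((d : ℤ) - 1) ≤ m → m ≤ (d : ℤ) - 1 →
      ((Finset.Ico AA BB).filter (fun j => j ≡ m [ZMOD ((e : ℕ) : ℤ)])).card
        = C + 1 := by
    intro m hm1 hm2
    have hez : (0 : ℤ) < (e : ℤ) := by exact_mod_cast he1
    have hmid : AA ≤ AA + (C : ℤ) * (e : ℤ) := by
      have : (0:ℤ) ≤ (C : ℤ) * (e : ℤ) := by positivity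
      omega
    have hBBeq : BB = AA + (C : ℤ) * (e : ℤ) + (2 * ((d : ℤ) - 1) + 1) := by omega
    rw [hBBeq, ← Finset.Ico_union_Ico_eq_Ico hmid (by omega),
      Finset.filter_union,
      Finset.card_union_of_disjoint
        (Finset.disjoint_filter_filter (Finset.Ico_disjoint_Ico_consecutive _ _ _)),
      count_periods _ m hez, count_partial _ ((d : ℤ) - 1) _ m hez (by omega)
        (by push_cast; omega) ⟨(p : ℤ) + C, by linear_combination hApd⟩ hm1 hm2]
  -- description of L m ∩ D
  have hbridge : ∀ x : ZMod n, ∀ m : ℤ, ∀ j : ℤ, x = (j : ZMod n) →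
      (ZMod.castHom hdvd (ZMod e) x = (m : ZMod e) ↔ j ≡ m [ZMOD ((e : ℕ) : ℤ)]) := by
    intro x m j hx
    rw [hx, map_intCast, ZMod.intCast_eq_intCast_iff]
  have hLD : ∀ m : ℤ, L m ∩ D =
      ((Finset.Ico AA BB).filter (fun j => j ≡ m [ZMOD ((e : ℕ) : ℤ)])).image
        (fun j : ℤ => (j : ZMod n)) := by
    intro m
    rw [hL m, hD]
    ext x
    simp only [Finset.mem_inter, Finset.mem_filter, Finset.mem_univ, true_and,
      Finset.mem_image]
    constructor
    · rintro ⟨hxm, j, hj, rfl⟩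
      exact ⟨j, ⟨hj, (hbridge _ m j rfl).mp hxm⟩, rfl⟩
    · rintro ⟨j, ⟨hj, hjm⟩, rfl⟩
      exact ⟨(hbridge _ m j rfl).mpr hjm, j, hj, rfl⟩
  have hLDcard : ∀ m : ℤ, -((d : ℤ) - 1) ≤ m → m ≤ (d : ℤ) - 1 →
      (L m ∩ D).card = C + 1 := by
    intro m hm1 hm2
    rw [hLD m, Finset.card_image_of_injOn
      (hinj.mono (by exact_mod_cast Finset.filter_subset _ _)), hcount m hm1 hm2]
  -- cardinality of L m
  have hLcard : ∀ m : ℤ, (L m).card = ν := by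
    intro m
    have hLm : L m = ((Finset.Ico (0 : ℤ) (0 + (ν : ℤ) * (e : ℤ))).filter
        (fun j => j ≡ m [ZMOD ((e : ℕ) : ℤ)])).image (fun j : ℤ => (j : ZMod n)) := by
      rw [hL m]
      ext x
      simp only [Finset.mem_filter, Finset.mem_univ, true_and, Finset.mem_image,
        Finset.mem_Ico]
      constructor
      · intro hx
        have hxcast : ((x.val : ℤ) : ZMod n) = x := by
          push_cast; rw [ZMod.natCast_val, ZMod.cast_id]
        have hv : (x.val : ℤ) < 0 + (ν : ℤ) * (e : ℤ) := by
          have hvl := ZMod.val_lt x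
          push_cast
          omega
        exact ⟨(x.val : ℤ), ⟨⟨by positivity, hv⟩, (hbridge x m _ hxcast.symm).mp hx⟩, hxcast⟩
      · rintro ⟨j, ⟨hj, hjm⟩, rfl⟩
        exact (hbridge _ m j rfl).mpr hjm
    have hinj2 : Set.InjOn (fun j : ℤ => (j : ZMod n))
        (Finset.Ico (0 : ℤ) (0 + (ν : ℤ) * (e : ℤ))) :=
      cast_injOn n (by push_cast; omega)
    rw [hLm, Finset.card_image_of_injOn
      (hinj2.mono (by exact_mod_cast Finset.filter_subset _ _)),
      count_periods _ m (by exact_mod_cast he1)]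
  -- the m-interval
  have hδ2 : ((δ : ℤ) - 2) / 2 = (d : ℤ) - 1 := by omega
  have hIcc : ∀ m ∈ Finset.Icc (-((d:ℤ) - 1)) ((d:ℤ) - 1),
      ∀ m' ∈ Finset.Icc (-((d:ℤ) - 1)) ((d:ℤ) - 1), m ≠ m' →
      Disjoint (L m) (L m') := by
    intro m hm m' hm' hne
    simp only [Finset.mem_Icc] at hm hm'
    rw [Finset.disjoint_left]
    intro x hx hx'
    rw [hL m, Finset.mem_filter] at hx
    rw [hL m', Finset.mem_filter] at hx'
    have hmm : (m : ZMod e) = (m' : ZMod e) := by rw [← hx.2, ← hx'.2]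
    rw [ZMod.intCast_eq_intCast_iff, Int.modEq_iff_dvd] at hmm
    exact hne (zeq_of_dvd (show (0:ℤ) < (e:ℕ) by exact_mod_cast he1) hmm
      (by omega) (by omega)).symm
  have hIcard : (Finset.Icc (-((d:ℤ) - 1)) ((d:ℤ) - 1)).card = 2 * d - 1 := by
    rw [Int.card_Icc]
    omega
  refine ⟨hDcard, ?_, ?_⟩
  · intro m hm
    rw [hδ2, Finset.mem_Icc] at hm
    have := hLDcard m hm.1 hm.2
    omega
  · simp only [hδ2]
    set I := Finset.Icc (-((d:ℤ) - 1)) ((d:ℤ) - 1) with hI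
    have hBcard : (I.biUnion fun m => L m).card = (2 * d - 1) * ν := by
      rw [Finset.card_biUnion hIcc]
      rw [Finset.sum_congr rfl (fun m _ => hLcard m), Finset.sum_const, hIcard, smul_eq_mul]
    have hBD : (I.biUnion fun m => L m) ∩ D = I.biUnion fun m => L m ∩ D := by
      ext x
      simp only [Finset.mem_inter, Finset.mem_biUnion]
      tauto
    have hdisj2 : ∀ m ∈ I, ∀ m' ∈ I, m ≠ m' → Disjoint (L m ∩ D) (L m' ∩ D) :=
      fun m hm m' hm' hne =>
        (hIcc m hm m' hm' hne).mono Finset.inter_subset_left Finset.inter_subset_left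
    have hBDcard : ((I.biUnion fun m => L m) ∩ D).card = (2 * d - 1) * (C + 1) := by
      rw [hBD, Finset.card_biUnion hdisj2,
        Finset.sum_congr rfl (fun m hm => by
          simp only [hI, Finset.mem_Icc] at hm
          exact hLDcard m hm.1 hm.2),
        Finset.sum_const, hIcard, smul_eq_mul]
    have hunion := Finset.card_union_add_card_inter (I.biUnion fun m => L m) D
    rw [hBcard, hDcard, hBDcard] at hunion
    -- final arithmetic
    have hkn : k ≤ n := le_trans (by rw [hk, hse]; exact Nat.mul_le_mul_left μ (by omega)) hμs
    have hfin : (2 * d - 1) * ν + N = (n - k) + (2 * d - 1) * (C + 1) := by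
      zify [hkn, show 1 ≤ 2 * d by omega]
      linear_combination H1 - H2 + H3 + (2*(d:ℤ) - 1 - (e:ℤ)) * H6 - (μ:ℤ) * H4
        + (1 - (μ:ℤ)) * H5
    omega
end
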